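/- If measurable functions U: [0,1] → ℝ and E: [0,1) → ℝ satisfy (1-q₃)·U(q₁/(1-q₃)) + E(q₃) = (1-q₁)·U(q₃/(1-q₁)) + E(q₁) for all q₁, q₃ ∈ [0,1) with q₁ + q₃ ≤ 1, then there exist constants a, b₁, b₂, d with U(y) = a·H₂(y) + b₂y + (b₁ - b₂) and E(x) = a·H₂(x) + b₁x + d. -/

import Mathlib

open scoped BigOperators

/-- Binary Shannon entropy (natural logarithm), with `H₂ 0 = H₂ 1 = 0`. -/
noncomputable def H2 (x : ℝ) : ℝ := -(x * Real.log x) - (1 - x) * Real.log (1 - x)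

open Real MeasureTheory Set intervalIntegral
open scoped ENNReal


lemma H2_zero : H2 0 = 0 := by simp [H2]

lemma H2_one : H2 1 = 0 := by simp [H2]

lemma H2_symm (x : ℝ) : H2 (1 - x) = H2 x := by
  unfold H2; ring_nf

lemma H2_fe {x y : ℝ} (hx : 0 < x) (hy : 0 < y) (hxy : x + y < 1) :
    H2 x + (1 - x) * H2 (y / (1 - x)) = H2 y + (1 - y) * H2 (x / (1 - y)) := by
  have hx1 : (0:ℝ) < 1 - x := by linarith
  have hy1 : (0:ℝ) < 1 - y := by linarith
  have e1 : 1 - y / (1 - x) = (1 - x - y) / (1 - x) := by field_simp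
  have e2 : 1 - x / (1 - y) = (1 - x - y) / (1 - y) := by field_simp; ring
  have hz : (0:ℝ) < 1 - x - y := by linarith
  unfold H2
  rw [e1, e2, Real.log_div hy.ne' hx1.ne', Real.log_div hx.ne' hy1.ne',
    Real.log_div hz.ne' hx1.ne', Real.log_div hz.ne' hy1.ne']
  field_simp
  ring

lemma hasDerivAt_H2 {x : ℝ} (hx : 0 < x) (hx1 : x < 1) :
    HasDerivAt H2 (Real.log (1 - x) - Real.log x) x := by
  have h1 : (0:ℝ) < 1 - x := by linarith
  have d1 : HasDerivAt (fun x : ℝ => x * Real.log x) (Real.log x + 1) x := by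
    have h := (hasDerivAt_id x).mul (Real.hasDerivAt_log hx.ne')
    refine h.congr_deriv ?_
    field_simp; simp only [id_eq]; ring
  have d2 : HasDerivAt (fun x : ℝ => (1 - x) * Real.log (1 - x))
      (-(Real.log (1 - x) + 1)) x := by
    have inner : HasDerivAt (fun x : ℝ => 1 - x) (-1) x := by
      simpa using (hasDerivAt_id' x).const_sub (1:ℝ)
    have dlog : HasDerivAt (fun x : ℝ => Real.log (1 - x)) (-(1/(1-x))) x := by
      have := (Real.hasDerivAt_log h1.ne').comp x inner
      simpa [div_eq_mul_inv, Function.comp_def] using this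
    have h := inner.mul dlog
    refine h.congr_deriv ?_
    field_simp
    ring
  have h := (d1.neg).sub d2
  have : H2 = fun x : ℝ => -(x * Real.log x) - (1 - x) * Real.log (1 - x) := rfl
  rw [this]
  refine h.congr_deriv ?_
  ring

lemma hasDerivAt_H2' {x : ℝ} (hx : 0 < x) (hx1 : x < 1) :
    HasDerivAt (fun x : ℝ => Real.log (1 - x) - Real.log x) (-(1 / (x * (1 - x)))) x := by
  have h1 : (0:ℝ) < 1 - x := by linarith
  have inner : HasDerivAt (fun x : ℝ => 1 - x) (-1) x := by
    simpa using (hasDerivAt_id' x).const_sub (1:ℝ)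
  have dlog : HasDerivAt (fun x : ℝ => Real.log (1 - x)) (-(1/(1-x))) x := by
    have := (Real.hasDerivAt_log h1.ne').comp x inner
    simpa [div_eq_mul_inv, Function.comp_def] using this
  have h := dlog.sub (Real.hasDerivAt_log hx.ne')
  refine h.congr_deriv ?_
  field_simp
  ring

open scoped ENNReal

lemma measure_image_le_of_deriv_le {s : Set ℝ} (hs : MeasurableSet s)
    {φ φ' : ℝ → ℝ} (hφ : ∀ x ∈ s, HasDerivWithinAt φ (φ' x) s x)
    {L : ℝ} (hφ' : ∀ x ∈ s, |φ' x| ≤ L) :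
    volume (φ '' s) ≤ ENNReal.ofReal L * volume s := by
  have h := MeasureTheory.addHaar_image_le_lintegral_abs_det_fderiv volume hs
      (f' := fun x => ContinuousLinearMap.smulRight (1 : ℝ →L[ℝ] ℝ) (φ' x))
      (fun x hx => (hφ x hx).hasFDerivWithinAt)
  refine h.trans ?_
  have h2 : ∀ x ∈ s, ENNReal.ofReal |(ContinuousLinearMap.smulRight (1 : ℝ →L[ℝ] ℝ) (φ' x)).det|
      ≤ ENNReal.ofReal L := by
    intro x hx
    rw [ContinuousLinearMap.det_smulRight, ContinuousLinearMap.one_apply, one_mul]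
    exact ENNReal.ofReal_le_ofReal (hφ' x hx)
  calc ∫⁻ x in s, ENNReal.ofReal |(ContinuousLinearMap.smulRight (1 : ℝ →L[ℝ] ℝ) (φ' x)).det|
      ≤ ∫⁻ _x in s, ENNReal.ofReal L := setLIntegral_mono' hs h2
    _ = ENNReal.ofReal L * volume s := by simp [setLIntegral_const]

lemma FEIT_bounded {F : ℝ → ℝ} (hF : Measurable F)
    (hfe : ∀ x y : ℝ, 0 ≤ x → x < 1 → 0 ≤ y → y < 1 → x + y ≤ 1 →
      F x + (1-x) * F (y/(1-x)) = F y + (1-y) * F (x/(1-y)))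
    {δ : ℝ} (hδ : 0 < δ) (hδ2 : δ ≤ 1/2) :
    ∃ M : ℝ, 0 ≤ M ∧ ∀ y ∈ Icc δ (1-δ), |F y| ≤ M := by
  classical
  set D : ℕ → Set ℝ := fun n => {t | t ∈ Ioo (0:ℝ) 1 ∧ (n:ℝ) < |F t|} with hD
  have hDmeas : ∀ n, MeasurableSet (D n) :=
    fun n => measurableSet_Ioo.inter (measurableSet_lt measurable_const hF.abs)
  have hanti : Antitone D := by
    intro m n hmn t ht
    exact ⟨ht.1, lt_of_le_of_lt (by exact_mod_cast Nat.cast_le.2 hmn) ht.2⟩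
  have hempty : ⋂ n, D n = ∅ := by
    ext t
    simp only [mem_iInter, mem_empty_iff_false, iff_false]
    intro h
    obtain ⟨n, hn⟩ := exists_nat_gt |F t|
    exact absurd (h n).2 (not_lt.2 hn.le)
  have hfin : volume (D 0) ≠ ⊤ := by
    refine ne_of_lt (lt_of_le_of_lt (measure_mono (fun t ht => ht.1)) ?_)
    rw [Real.volume_Ioo]; exact ENNReal.ofReal_lt_top
  have htend : Filter.Tendsto (volume ∘ D) Filter.atTop (nhds 0) := by
    have := tendsto_measure_iInter_atTop (μ := volume)
      (fun n => (hDmeas n).nullMeasurableSet) hanti ⟨0, hfin⟩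
    rwa [hempty, measure_empty] at this
  set ε : ℝ := δ^2/8 with hε
  have hεpos : 0 < ε := by positivity
  have hev : ∀ᶠ n in Filter.atTop, volume (D n) < ENNReal.ofReal ε :=
    htend.eventually_lt_const (by simp [ENNReal.ofReal_pos.2 hεpos])
  obtain ⟨n, hn⟩ := hev.exists
  refine ⟨3 * n, by positivity, ?_⟩
  rintro y ⟨hyδ, hy1δ⟩
  have hy0 : 0 < y := lt_of_lt_of_le hδ hyδ
  have hy1 : y < 1 := lt_of_le_of_lt hy1δ (by linarith)
  have h1y : δ ≤ 1 - y := by linarith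
  have h1y0 : 0 < 1 - y := by linarith
  -- three bad sets
  set B2 : Set ℝ := (fun u => (1-y)*u) '' D n with hB2
  set B3 : Set ℝ := (fun u => 1 - y/u) '' (D n ∩ Ioi y) with hB3
  have hμ2 : volume B2 ≤ ENNReal.ofReal 1 * volume (D n) := by
    refine measure_image_le_of_deriv_le (hDmeas n) (φ' := fun _ => 1-y) ?_ ?_
    · intro x hx
      exact ((hasDerivAt_id x).const_mul (1-y)).hasDerivWithinAt.congr_deriv (by ring)
    · intro x hx; rw [abs_of_nonneg h1y0.le]; linarith
  have hμ3 : volume B3 ≤ ENNReal.ofReal (1/δ) * volume (D n) := by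
    have hmeas3 : MeasurableSet (D n ∩ Ioi y) := (hDmeas n).inter measurableSet_Ioi
    have h3 := measure_image_le_of_deriv_le (L := 1/δ) hmeas3 (φ := fun u => 1 - y/u)
      (φ' := fun u => y/u^2) ?_ ?_
    · exact h3.trans (mul_le_mul_right (measure_mono inter_subset_left) _)
    · intro u hu
      have hu0 : 0 < u := lt_trans hy0 hu.2
      have : HasDerivAt (fun u : ℝ => 1 - y/u) (y/u^2) u := by
        have hinv : HasDerivAt (fun u : ℝ => u⁻¹) (-(u^2)⁻¹) u := by
          simpa using hasDerivAt_inv hu0.ne'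
        have := ((hinv.const_mul y).const_sub 1)
        refine this.congr_deriv ?_
        field_simp
      exact this.hasDerivWithinAt
    · intro u hu
      have hu0 : 0 < u := lt_trans hy0 hu.2
      have huy : y < u := hu.2
      rw [abs_of_nonneg (by positivity)]
      rw [div_le_div_iff₀ (by positivity) hδ]
      have h1 : δ ≤ u := by nlinarith
      nlinarith
  -- total bad measure is small
  have hsum : volume (D n ∪ B2 ∪ B3) < ENNReal.ofReal (1 - y) := by
    have h1 : volume (D n ∪ B2 ∪ B3) ≤ volume (D n) + volume B2 + volume B3 :=
      le_trans (measure_union_le _ _) (add_le_add_left (measure_union_le _ _) _)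
    have hm : volume (D n) < ENNReal.ofReal ε := hn
    have key : volume (D n) + volume B2 + volume B3
        ≤ (1 + ENNReal.ofReal 1 + ENNReal.ofReal (1/δ)) * volume (D n) := by
      rw [add_mul, add_mul, one_mul]
      exact add_le_add (add_le_add le_rfl hμ2) hμ3
    refine lt_of_le_of_lt (h1.trans key) ?_
    have hlt : (1 + ENNReal.ofReal 1 + ENNReal.ofReal (1/δ)) * volume (D n)
        < (1 + ENNReal.ofReal 1 + ENNReal.ofReal (1/δ)) * ENNReal.ofReal ε := by
      refine ENNReal.mul_lt_mul_right ?_ ?_ hm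
      · simp [add_eq_zero]
      · refine ne_of_lt ?_
        have : ENNReal.ofReal (1/δ) < ⊤ := ENNReal.ofReal_lt_top
        simp only [ENNReal.add_lt_top]
        exact ⟨⟨ENNReal.one_lt_top, ENNReal.ofReal_lt_top⟩, ENNReal.ofReal_lt_top⟩
    refine lt_of_lt_of_le hlt ?_
    have e1 : (1 : ℝ≥0∞) = ENNReal.ofReal 1 := by simp
    rw [e1, ← ENNReal.ofReal_add (by norm_num) (by positivity),
      ← ENNReal.ofReal_add (by positivity) (by positivity),
      ← ENNReal.ofReal_mul (by positivity)]
    apply ENNReal.ofReal_le_ofReal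
    have : (1 + 1 + 1/δ) * ε ≤ δ/2 := by
      rw [hε]
      have hd : (1/δ) * (δ^2/8) = δ/8 := by field_simp
      nlinarith [hd, hδ, hδ2, sq_nonneg δ]
    linarith
  -- find a good point x
  have hnotsub : ¬ (Ioo 0 (1-y) ⊆ D n ∪ B2 ∪ B3) := by
    intro hsub
    have := measure_mono (μ := volume) hsub
    rw [Real.volume_Ioo, sub_zero] at this
    exact absurd (lt_of_le_of_lt this hsum) (lt_irrefl _)
  obtain ⟨x, hxI, hxbad⟩ := not_subset.1 hnotsub
  have hx0 : 0 < x := hxI.1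
  have hx1y : x < 1 - y := hxI.2
  have hx1 : x < 1 := by linarith
  have hxA : ¬ (x ∈ D n) := fun h => hxbad (Or.inl (Or.inl h))
  have hFx : |F x| ≤ n := by
    by_contra h
    exact hxA ⟨⟨hx0, hx1⟩, not_le.1 h⟩
  have hFx2 : |F (x/(1-y))| ≤ n := by
    by_contra h
    have hu : x/(1-y) ∈ D n := ⟨⟨by positivity, (div_lt_one h1y0).2 hx1y⟩, not_le.1 h⟩
    exact hxbad (Or.inl (Or.inr ⟨x/(1-y), hu, by field_simp⟩))
  have hFx3 : |F (y/(1-x))| ≤ n := by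
    by_contra h
    have h1x : 0 < 1 - x := by linarith
    have hu1 : y/(1-x) < 1 := (div_lt_one h1x).2 (by linarith)
    have hu0 : y < y/(1-x) := by
      rw [lt_div_iff₀ h1x]; nlinarith
    have hu : y/(1-x) ∈ D n ∩ Ioi y := ⟨⟨⟨by positivity, hu1⟩, not_le.1 h⟩, hu0⟩
    refine hxbad (Or.inr ⟨y/(1-x), hu, ?_⟩)
    field_simp
    ring
  have heq := hfe x y hx0.le hx1 hy0.le hy1 (by linarith)
  have h1x : 0 < 1 - x := by linarith
  have : F y = F x + (1-x) * F (y/(1-x)) - (1-y) * F (x/(1-y)) := by linarith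
  rw [this]
  have b1 : |(1-x) * F (y/(1-x))| ≤ n := by
    rw [abs_mul, abs_of_nonneg h1x.le]
    calc (1-x) * |F (y/(1-x))| ≤ 1 * n :=
      mul_le_mul (by linarith) hFx3 (abs_nonneg _) (by norm_num)
    _ = n := one_mul _
  have b2 : |(1-y) * F (x/(1-y))| ≤ n := by
    rw [abs_mul, abs_of_nonneg h1y0.le]
    calc (1-y) * |F (x/(1-y))| ≤ 1 * n :=
      mul_le_mul (by linarith) hFx2 (abs_nonneg _) (by norm_num)
    _ = n := one_mul _
  have e1 := abs_le.1 hFx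
  have e2 := abs_le.1 b1
  have e3 := abs_le.1 b2
  rw [abs_le]
  constructor <;> nlinarith

lemma loc_bdd_of_bdd {F : ℝ → ℝ}
    (hbdd : ∀ δ : ℝ, 0 < δ → δ ≤ 1/2 → ∃ M : ℝ, 0 ≤ M ∧ ∀ y ∈ Icc δ (1-δ), |F y| ≤ M) :
    ∀ a b : ℝ, 0 < a → b < 1 → ∃ M : ℝ, 0 ≤ M ∧ ∀ t ∈ Icc a b, |F t| ≤ M := by
  intro a b ha hb
  rcases le_or_gt a b with hab | hab
  · set δ := min a (1-b) with hδdef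
    have hδ0 : 0 < δ := lt_min ha (by linarith)
    have hδhalf : δ ≤ 1/2 := by
      rcases le_or_gt a (1/2) with h | h
      · exact le_trans (min_le_left _ _) h
      · refine le_trans (min_le_right _ _) ?_
        linarith
    obtain ⟨M, hM0, hM⟩ := hbdd δ hδ0 hδhalf
    refine ⟨M, hM0, fun t ht => hM t ⟨le_trans (min_le_left _ _) ht.1, ?_⟩⟩
    have : δ ≤ 1 - b := min_le_right _ _
    linarith [ht.2]
  · exact ⟨0, le_rfl, fun t ht => absurd (le_trans ht.1 ht.2) (not_le.2 hab)⟩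

lemma intInt_of_locbdd {G : ℝ → ℝ} (hG : Measurable G)
    (hloc : ∀ a b : ℝ, 0 < a → b < 1 → ∃ M : ℝ, 0 ≤ M ∧ ∀ t ∈ Icc a b, |G t| ≤ M) :
    ∀ a b : ℝ, 0 < a → a < 1 → 0 < b → b < 1 → IntervalIntegrable G volume a b := by
  have key : ∀ a b : ℝ, 0 < a → b < 1 → a ≤ b → IntervalIntegrable G volume a b := by
    intro a b ha hb hab
    obtain ⟨M, hM0, hM⟩ := hloc a b ha hb
    rw [intervalIntegrable_iff_integrableOn_Ioc_of_le hab]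
    refine Integrable.mono' (integrable_const M) hG.aestronglyMeasurable ?_
    refine (ae_restrict_iff' measurableSet_Ioc).2 (Filter.Eventually.of_forall ?_)
    intro t ht
    exact hM t ⟨ht.1.le, ht.2⟩
  intro a b ha ha1 hb hb1
  rcases le_or_gt a b with hab | hab
  · exact key a b ha hb1 hab
  · exact (key b a hb ha1 hab.le).symm

noncomputable def prim (G : ℝ → ℝ) : ℝ → ℝ := fun t => ∫ s in (1/2:ℝ)..t, G s

lemma prim_sub {G : ℝ → ℝ}
    (hint : ∀ a b : ℝ, 0 < a → a < 1 → 0 < b → b < 1 → IntervalIntegrable G volume a b)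
    {a b : ℝ} (ha : 0 < a) (ha1 : a < 1) (hb : 0 < b) (hb1 : b < 1) :
    prim G b - prim G a = ∫ s in a..b, G s := by
  exact intervalIntegral.integral_interval_sub_left
    (hint (1/2) b (by norm_num) (by norm_num) hb hb1)
    (hint (1/2) a (by norm_num) (by norm_num) ha ha1)

lemma prim_continuousOn {G : ℝ → ℝ}
    (hloc : ∀ a b : ℝ, 0 < a → b < 1 → ∃ M : ℝ, 0 ≤ M ∧ ∀ t ∈ Icc a b, |G t| ≤ M)
    (hint : ∀ a b : ℝ, 0 < a → a < 1 → 0 < b → b < 1 → IntervalIntegrable G volume a b) :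
    ContinuousOn (prim G) (Ioo 0 1) := by
  intro t₀ ht₀
  set a := t₀/2 with hadef
  set b := (1+t₀)/2 with hbdef
  have ha0 : 0 < a := by simp [hadef]; linarith [ht₀.1]
  have hab : ∀ s ∈ Ioo a b, 0 < s ∧ s < 1 := by
    intro s hs
    constructor
    · linarith [hs.1, ht₀.1]
    · have : b < 1 := by simp [hbdef]; linarith [ht₀.2]
      linarith [hs.2]
  have hb1 : b < 1 := by simp [hbdef]; linarith [ht₀.2]
  obtain ⟨M, hM0, hM⟩ := hloc a b ha0 hb1
  have hlip : LipschitzOnWith (Real.toNNReal M) (prim G) (Ioo a b) := by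
    refine LipschitzOnWith.of_dist_le_mul ?_
    intro s hs t ht
    have h1 := hab s hs
    have h2 := hab t ht
    have hsub : prim G s - prim G t = ∫ u in t..s, G u :=
      prim_sub hint h2.1 h2.2 h1.1 h1.2
    rw [Real.dist_eq, Real.dist_eq, hsub]
    have := intervalIntegral.norm_integral_le_of_norm_le_const (C := M) (a := t) (b := s)
      (f := G) ?_
    · simpa [Real.norm_eq_abs, abs_sub_comm s t, Real.coe_toNNReal M hM0] using this
    · intro x hx
      have hx' : x ∈ Icc a b := by
        rcases Set.mem_uIoc.1 hx with h | h
        · exact ⟨by linarith [h.1, ht.1], by linarith [h.2, hs.2]⟩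
        · exact ⟨by linarith [h.1, hs.1], by linarith [h.2, ht.2]⟩
      exact hM x hx'
  have hmem : Ioo a b ∈ nhds t₀ := by
    refine Ioo_mem_nhds ?_ ?_ <;> simp [hadef, hbdef] <;> linarith [ht₀.1, ht₀.2]
  exact ((hlip.continuousOn).continuousAt hmem).continuousWithinAt

lemma prim_hasDerivAt {G : ℝ → ℝ} (hG : Measurable G)
    (hint : ∀ a b : ℝ, 0 < a → a < 1 → 0 < b → b < 1 → IntervalIntegrable G volume a b)
    {t : ℝ} (ht : t ∈ Ioo (0:ℝ) 1) (hcont : ContinuousAt G t) :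
    HasDerivAt (prim G) (G t) t :=
  intervalIntegral.integral_hasDerivAt_right
    (hint (1/2) t (by norm_num) (by norm_num) ht.1 ht.2)
    (hG.stronglyMeasurable.stronglyMeasurableAtFilter)
    hcont

lemma prim_contDiffOn {G : ℝ → ℝ} {n : ℕ} (hG : Measurable G)
    (hint : ∀ a b : ℝ, 0 < a → a < 1 → 0 < b → b < 1 → IntervalIntegrable G volume a b)
    (hGc : ContDiffOn ℝ n G (Ioo 0 1)) :
    ContDiffOn ℝ (n+1) (prim G) (Ioo 0 1) := by
  rw [contDiffOn_succ_iff_deriv_of_isOpen isOpen_Ioo]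
  have hcont : ContinuousOn G (Ioo 0 1) := hGc.continuousOn
  have hderiv : ∀ t ∈ Ioo (0:ℝ) 1, HasDerivAt (prim G) (G t) t := fun t ht =>
    prim_hasDerivAt hG hint ht (hcont.continuousAt (Ioo_mem_nhds ht.1 ht.2))
  refine ⟨fun t ht => (hderiv t ht).differentiableAt.differentiableWithinAt, ?_, ?_⟩
  · intro h
    exact absurd h (by simp)
  · exact hGc.congr fun t ht => (hderiv t ht).deriv

lemma FEIT_rep {F : ℝ → ℝ} (hF : Measurable F)
    (hloc : ∀ a b : ℝ, 0 < a → b < 1 → ∃ M : ℝ, 0 ≤ M ∧ ∀ t ∈ Icc a b, |F t| ≤ M)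
    (hintF : ∀ a b : ℝ, 0 < a → a < 1 → 0 < b → b < 1 → IntervalIntegrable F volume a b)
    (hintQ : ∀ a b : ℝ, 0 < a → a < 1 → 0 < b → b < 1 →
      IntervalIntegrable (fun s => F s / s^3) volume a b)
    (hfe : ∀ x y : ℝ, 0 ≤ x → x < 1 → 0 ≤ y → y < 1 → x + y ≤ 1 →
      F x + (1-x) * F (y/(1-x)) = F y + (1-y) * F (x/(1-y)))
    {α β : ℝ} (hα0 : 0 < α) (hαβ : α < β) (hβ1 : β < 1)
    {y : ℝ} (hy : y ∈ Ioo (0:ℝ) (1-β)) :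
    (β - α) * F y = (prim F β - prim F α)
      + y^2 * (prim (fun s => F s/s^3) (y/(1-β)) - prim (fun s => F s/s^3) (y/(1-α)))
      - (1-y)^2 * (prim F (β/(1-y)) - prim F (α/(1-y))) := by
  obtain ⟨hy0, hyβ⟩ := hy
  have hβ1y : β < 1 - y := by linarith
  have hy1 : y < 1 := by linarith
  have h1y : 0 < 1 - y := by linarith
  have hα1 : α < 1 := by linarith
  have h1α : 0 < 1 - α := by linarith
  have h1β : 0 < 1 - β := by linarith
  set c₁ := y/(1-α) with hc₁
  set c₂ := y/(1-β) with hc₂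
  have hc₁0 : 0 < c₁ := by positivity
  have hc₂1 : c₂ < 1 := (div_lt_one h1β).2 (by linarith)
  have hc₁₂ : c₁ ≤ c₂ := by
    rw [hc₁, hc₂, div_le_div_iff₀ h1α h1β]
    nlinarith
  have hc₂0 : 0 < c₂ := by positivity
  have hc₁1 : c₁ < 1 := lt_of_le_of_lt hc₁₂ hc₂1
  -- arguments of F in second integrand stay in [c₁, c₂]
  have hrange : ∀ x ∈ Icc α β, y/(1-x) ∈ Icc c₁ c₂ := by
    intro x hx
    have h1x : 0 < 1 - x := by linarith [hx.2]
    constructor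
    · rw [hc₁, div_le_div_iff₀ h1α h1x]; nlinarith [hx.1]
    · rw [hc₂, div_le_div_iff₀ h1x h1β]; nlinarith [hx.2]
  -- integrability of the three integrands on α..β
  have iF : IntervalIntegrable F volume α β := hintF α β hα0 hα1 (by linarith) hβ1
  obtain ⟨M, hM0, hM⟩ := hloc c₁ c₂ hc₁0 hc₂1
  have measG : Measurable fun x : ℝ => (1-x) * F (y/(1-x)) := by
    exact (measurable_const.sub measurable_id).mul
      (hF.comp (measurable_const.div (measurable_const.sub measurable_id)))
  have iG : IntervalIntegrable (fun x => (1-x) * F (y/(1-x))) volume α β := by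
    rw [intervalIntegrable_iff_integrableOn_Ioc_of_le hαβ.le]
    refine Integrable.mono' (integrable_const M) measG.aestronglyMeasurable ?_
    refine (ae_restrict_iff' measurableSet_Ioc).2 (Filter.Eventually.of_forall ?_)
    intro x hx
    have hx' : x ∈ Icc α β := ⟨hx.1.le, hx.2⟩
    have h1x : 0 < 1 - x := by linarith [hx'.2]
    have hb := hM _ (hrange x hx')
    rw [Real.norm_eq_abs, abs_mul, abs_of_nonneg h1x.le]
    calc (1-x) * |F (y/(1-x))| ≤ 1 * M :=
      mul_le_mul (by linarith [hx'.1]) hb (abs_nonneg _) one_pos.le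
    _ = M := one_mul M
  obtain ⟨M', hM'0, hM'⟩ := hloc (α/(1-y)) (β/(1-y)) (div_pos hα0 h1y) ((div_lt_one h1y).2 hβ1y)
  have iH : IntervalIntegrable (fun x => F (x/(1-y))) volume α β := by
    rw [intervalIntegrable_iff_integrableOn_Ioc_of_le hαβ.le]
    refine Integrable.mono' (integrable_const M')
      ((hF.comp (measurable_id.div measurable_const)).aestronglyMeasurable) ?_
    refine (ae_restrict_iff' measurableSet_Ioc).2 (Filter.Eventually.of_forall ?_)
    intro x hx
    rw [Real.norm_eq_abs]
    refine hM' _ ⟨?_, ?_⟩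
    · rw [div_le_div_iff₀ h1y h1y]; nlinarith [hx.1]
    · rw [div_le_div_iff₀ h1y h1y]; nlinarith [hx.2]
  -- integrate the functional equation over x ∈ [α, β]
  have hptwise : EqOn (fun x => F x + (1-x) * F (y/(1-x)))
      (fun x => F y + (1-y) * F (x/(1-y))) (uIcc α β) := by
    intro x hx
    rw [uIcc_of_le hαβ.le] at hx
    exact hfe x y (by linarith [hx.1]) (by linarith [hx.2]) hy0.le hy1
      (by linarith [hx.2])
  have hint_eq : ∫ x in α..β, (F x + (1-x) * F (y/(1-x)))
      = ∫ x in α..β, (F y + (1-y) * F (x/(1-y))) :=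
    intervalIntegral.integral_congr hptwise
  rw [intervalIntegral.integral_add iF iG,
    intervalIntegral.integral_add intervalIntegrable_const (iH.const_mul (1-y)),
    intervalIntegral.integral_const, intervalIntegral.integral_const_mul] at hint_eq
  -- change of variables in ∫ F (x/(1-y))
  have cov3 : ∫ x in α..β, F (x/(1-y))
      = (1-y) * (prim F (β/(1-y)) - prim F (α/(1-y))) := by
    rw [intervalIntegral.integral_comp_div (f := F) (c := 1-y) h1y.ne', smul_eq_mul]
    congr 1
    rw [prim_sub hintF (div_pos hα0 h1y) ((div_lt_one h1y).2 (by linarith))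
      (div_pos (by linarith : (0:ℝ) < β) h1y) ((div_lt_one h1y).2 hβ1y)]
  -- change of variables in ∫ (1-x) F (y/(1-x))
  have cov2 : ∫ x in α..β, (1-x) * F (y/(1-x))
      = y^2 * (prim (fun s => F s/s^3) c₂ - prim (fun s => F s/s^3) c₁) := by
    have himg : (fun x : ℝ => y/(1-x)) '' (Icc α β) = Icc c₁ c₂ := by
      ext t
      constructor
      · rintro ⟨x, hx, rfl⟩
        exact hrange x hx
      · rintro ⟨ht₁, ht₂⟩
        have ht0 : 0 < t := lt_of_lt_of_le hc₁0 ht₁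
        refine ⟨1 - y/t, ⟨?_, ?_⟩, ?_⟩
        · have : y/t ≤ 1 - α := by
            rw [div_le_iff₀ ht0]
            rw [hc₁, div_le_iff₀ h1α] at ht₁
            linarith
          linarith
        · have : 1 - β ≤ y/t := by
            rw [le_div_iff₀ ht0]
            rw [hc₂, le_div_iff₀ h1β] at ht₂
            linarith
          linarith
        · field_simp; rw [sub_sub_cancel, div_self hy0.ne']
    have hderivs : ∀ x ∈ Icc α β,
        HasDerivWithinAt (fun x : ℝ => y/(1-x)) (y/(1-x)^2) (Icc α β) x := by
      intro x hx
      have h1x : (0:ℝ) < 1 - x := by linarith [hx.2]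
      have hinv : HasDerivAt (fun x : ℝ => (1-x)⁻¹) ((1-x)^2)⁻¹ x := by
        have inner : HasDerivAt (fun x : ℝ => 1 - x) (-1) x := by
          simpa using (hasDerivAt_id' x).const_sub (1:ℝ)
        have := (hasDerivAt_inv h1x.ne').comp x inner
        refine this.congr_deriv ?_
        field_simp
      refine HasDerivAt.hasDerivWithinAt ?_
      have h2 := hinv.const_mul y
      have e : y * ((1-x)^2)⁻¹ = y/(1-x)^2 := by field_simp
      rw [← e]
      simpa [div_eq_mul_inv] using h2
    have hinj : InjOn (fun x : ℝ => y/(1-x)) (Icc α β) := by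
      intro x hx x' hx' h
      have h1x : (0:ℝ) < 1 - x := by linarith [hx.2]
      have h1x' : (0:ℝ) < 1 - x' := by linarith [hx'.2]
      rw [div_eq_div_iff h1x.ne' h1x'.ne'] at h
      nlinarith
    have key := integral_image_eq_integral_abs_deriv_smul measurableSet_Icc hderivs hinj
      (fun t => y^2 * (F t / t^3))
    rw [himg] at key
    have hL : ∫ t in Icc c₁ c₂, y^2 * (F t / t^3)
        = y^2 * (prim (fun s => F s/s^3) c₂ - prim (fun s => F s/s^3) c₁) := by
      rw [MeasureTheory.integral_Icc_eq_integral_Ioc,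
        ← intervalIntegral.integral_of_le hc₁₂,
        intervalIntegral.integral_const_mul,
        prim_sub hintQ hc₁0 hc₁1 hc₂0 hc₂1]
    have hR : ∫ x in Icc α β, |y/(1-x)^2| • (y^2 * (F (y/(1-x)) / (y/(1-x))^3))
        = ∫ x in α..β, (1-x) * F (y/(1-x)) := by
      rw [MeasureTheory.integral_Icc_eq_integral_Ioc, ← intervalIntegral.integral_of_le hαβ.le]
      refine intervalIntegral.integral_congr ?_
      intro x hx
      rw [uIcc_of_le hαβ.le] at hx
      have h1x : (0:ℝ) < 1 - x := by linarith [hx.2]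
      simp only [smul_eq_mul]
      rw [abs_of_nonneg (by positivity : (0:ℝ) ≤ y/(1-x)^2)]
      field_simp
    rw [hL, hR] at key
    exact key.symm
  rw [cov2, cov3, ← prim_sub hintF hα0 hα1 (by linarith) hβ1, smul_eq_mul] at hint_eq
  linarith [hint_eq]

lemma FEIT_contDiffAt {F : ℝ → ℝ} (hF : Measurable F)
    (hloc : ∀ a b : ℝ, 0 < a → b < 1 → ∃ M : ℝ, 0 ≤ M ∧ ∀ t ∈ Icc a b, |F t| ≤ M)
    (hintF : ∀ a b : ℝ, 0 < a → a < 1 → 0 < b → b < 1 → IntervalIntegrable F volume a b)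
    (hintQ : ∀ a b : ℝ, 0 < a → a < 1 → 0 < b → b < 1 →
      IntervalIntegrable (fun s => F s / s^3) volume a b)
    (hfe : ∀ x y : ℝ, 0 ≤ x → x < 1 → 0 ≤ y → y < 1 → x + y ≤ 1 →
      F x + (1-x) * F (y/(1-x)) = F y + (1-y) * F (x/(1-y)))
    {m : ℕ} (hP : ContDiffOn ℝ m (prim F) (Ioo 0 1))
    (hQ : ContDiffOn ℝ m (prim (fun s => F s/s^3)) (Ioo 0 1))
    {y₀ : ℝ} (hy₀ : y₀ ∈ Ioo (0:ℝ) 1) : ContDiffAt ℝ m F y₀ := by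
  obtain ⟨hy₀0, hy₀1⟩ := hy₀
  set β : ℝ := (1-y₀)/2 with hβdef
  set α : ℝ := (1-y₀)/4 with hαdef
  have hα0 : 0 < α := by rw [hαdef]; linarith
  have hαβ : α < β := by rw [hαdef, hβdef]; linarith
  have hβ1 : β < 1 := by rw [hβdef]; linarith
  have hy₀β : y₀ < 1 - β := by rw [hβdef]; linarith
  have hβα : β - α ≠ 0 := by linarith
  set P := prim F with hP'
  set Q := prim (fun s => F s/s^3) with hQ'
  set R : ℝ → ℝ := fun y => (β - α)⁻¹ * ((P β - P α)
      + y^2 * (Q (y/(1-β)) - Q (y/(1-α)))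
      - (1-y)^2 * (P (β/(1-y)) - P (α/(1-y)))) with hRdef
  have hEq : EqOn F R (Ioo 0 (1-β)) := by
    intro y hy
    have := FEIT_rep hF hloc hintF hintQ hfe hα0 hαβ hβ1 hy
    rw [hRdef]
    dsimp only
    rw [← this]
    field_simp
  have hnhds : Ioo (0:ℝ) (1-β) ∈ nhds y₀ := Ioo_mem_nhds hy₀0 hy₀β
  have hcP : ∀ z ∈ Ioo (0:ℝ) 1, ContDiffAt ℝ m P z := fun z hz =>
    hP.contDiffAt (mem_nhds_iff.2 ⟨Ioo 0 1, subset_rfl, isOpen_Ioo, hz⟩)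
  have hcQ : ∀ z ∈ Ioo (0:ℝ) 1, ContDiffAt ℝ m Q z := fun z hz =>
    hQ.contDiffAt (mem_nhds_iff.2 ⟨Ioo 0 1, subset_rfl, isOpen_Ioo, hz⟩)
  have h1β : 0 < 1 - β := by linarith
  have h1α : 0 < 1 - α := by linarith
  have h1y₀ : 0 < 1 - y₀ := by linarith
  have t1 : ContDiffAt ℝ m (fun y => Q (y/(1-β))) y₀ := by
    refine ContDiffAt.comp y₀ (hcQ _ ⟨by positivity, (div_lt_one h1β).2 hy₀β⟩) ?_
    exact contDiffAt_id.div_const _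
  have t2 : ContDiffAt ℝ m (fun y => Q (y/(1-α))) y₀ := by
    refine ContDiffAt.comp y₀ (hcQ _ ⟨by positivity, (div_lt_one h1α).2 (by linarith)⟩) ?_
    exact contDiffAt_id.div_const _
  have hβy₀ : β/(1-y₀) < 1 := (div_lt_one h1y₀).2 (by rw [hβdef]; linarith)
  have hαy₀ : α/(1-y₀) < 1 := (div_lt_one h1y₀).2 (by rw [hαdef]; linarith)
  have inner3 : ContDiffAt ℝ m (fun y : ℝ => β/(1-y)) y₀ :=
    contDiffAt_const.div (contDiffAt_const.sub contDiffAt_id) h1y₀.ne'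
  have inner4 : ContDiffAt ℝ m (fun y : ℝ => α/(1-y)) y₀ :=
    contDiffAt_const.div (contDiffAt_const.sub contDiffAt_id) h1y₀.ne'
  have t3 : ContDiffAt ℝ m (fun y => P (β/(1-y))) y₀ :=
    ContDiffAt.comp y₀ (hcP _ ⟨by positivity, hβy₀⟩) inner3
  have t4 : ContDiffAt ℝ m (fun y => P (α/(1-y))) y₀ :=
    ContDiffAt.comp y₀ (hcP _ ⟨by positivity, hαy₀⟩) inner4
  have hR : ContDiffAt ℝ m R y₀ := by
    rw [hRdef]
    refine contDiffAt_const.mul ?_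
    refine ContDiffAt.sub ?_ ?_
    · refine contDiffAt_const.add ?_
      exact (contDiffAt_id.pow 2).mul (t1.sub t2)
    · exact ((contDiffAt_const.sub contDiffAt_id).pow 2).mul (t3.sub t4)
  exact hR.congr_of_eventuallyEq (Filter.eventuallyEq_of_mem hnhds hEq)

lemma FEIT_smooth {F : ℝ → ℝ} (hF : Measurable F)
    (hfe : ∀ x y : ℝ, 0 ≤ x → x < 1 → 0 ≤ y → y < 1 → x + y ≤ 1 →
      F x + (1-x) * F (y/(1-x)) = F y + (1-y) * F (x/(1-y))) :
    ∀ y₀ ∈ Ioo (0:ℝ) 1, ContDiffAt ℝ 2 F y₀ := by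
  have hbdd : ∀ δ : ℝ, 0 < δ → δ ≤ 1/2 → ∃ M : ℝ, 0 ≤ M ∧ ∀ y ∈ Icc δ (1-δ), |F y| ≤ M :=
    fun δ h1 h2 => FEIT_bounded hF hfe h1 h2
  have hloc := loc_bdd_of_bdd hbdd
  have hQmeas : Measurable fun s : ℝ => F s / s^3 := hF.div (measurable_id.pow_const 3)
  have hlocQ : ∀ a b : ℝ, 0 < a → b < 1 → ∃ M : ℝ, 0 ≤ M ∧
      ∀ t ∈ Icc a b, |F t / t^3| ≤ M := by
    intro a b ha hb
    obtain ⟨M, hM0, hM⟩ := hloc a b ha hb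
    refine ⟨M / a^3, by positivity, fun t ht => ?_⟩
    have ht0 : 0 < t := lt_of_lt_of_le ha ht.1
    rw [abs_div, abs_of_nonneg (by positivity : (0:ℝ) ≤ t^3),
      div_le_div_iff₀ (by positivity) (by positivity)]
    have h1 := hM t ht
    have h2 : a^3 ≤ t^3 := pow_le_pow_left₀ ha.le ht.1 3
    calc |F t| * a^3 ≤ M * a^3 := mul_le_mul_of_nonneg_right h1 (by positivity)
      _ ≤ M * t^3 := mul_le_mul_of_nonneg_left h2 hM0
  have hintF := intInt_of_locbdd hF hloc
  have hintQ := intInt_of_locbdd hQmeas hlocQ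
  have hP0 : ContDiffOn ℝ 0 (prim F) (Ioo 0 1) := by
    rw [contDiffOn_zero]; exact prim_continuousOn hloc hintF
  have hQ0 : ContDiffOn ℝ 0 (prim fun s => F s/s^3) (Ioo 0 1) := by
    rw [contDiffOn_zero]; exact prim_continuousOn hlocQ hintQ
  have hc0 : ContDiffOn ℝ 0 F (Ioo 0 1) := by
    rw [contDiffOn_zero]
    intro y hy
    have := FEIT_contDiffAt hF hloc hintF hintQ hfe (m := 0) hP0 hQ0 hy
    exact (by exact_mod_cast this : ContDiffAt ℝ 0 F y).continuousAt.continuousWithinAt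
  have hdivtrans : ∀ n : ℕ, ContDiffOn ℝ n F (Ioo 0 1) →
      ContDiffOn ℝ n (fun s => F s/s^3) (Ioo 0 1) := by
    intro n h
    refine h.div ((contDiff_id.pow 3).contDiffOn) ?_
    intro t ht
    have : (0:ℝ) < t := ht.1
    positivity
  have hP1 : ContDiffOn ℝ 1 (prim F) (Ioo 0 1) := by
    have := prim_contDiffOn (n := 0) hF hintF (by exact_mod_cast hc0)
    exact_mod_cast this
  have hQ1 : ContDiffOn ℝ 1 (prim fun s => F s/s^3) (Ioo 0 1) := by
    have := prim_contDiffOn (n := 0) hQmeas hintQ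
      (by exact_mod_cast hdivtrans 0 (by exact_mod_cast hc0))
    exact_mod_cast this
  have hc1 : ContDiffOn ℝ 1 F (Ioo 0 1) := by
    intro y hy
    have := FEIT_contDiffAt hF hloc hintF hintQ hfe (m := 1)
      (by exact_mod_cast hP1) (by exact_mod_cast hQ1) hy
    exact (by exact_mod_cast this : ContDiffAt ℝ 1 F y).contDiffWithinAt
  have hP2 : ContDiffOn ℝ 2 (prim F) (Ioo 0 1) := by
    have := prim_contDiffOn (n := 1) hF hintF (by exact_mod_cast hc1)
    exact_mod_cast this
  have hQ2 : ContDiffOn ℝ 2 (prim fun s => F s/s^3) (Ioo 0 1) := by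
    have := prim_contDiffOn (n := 1) hQmeas hintQ
      (by exact_mod_cast hdivtrans 1 (by exact_mod_cast hc1))
    exact_mod_cast this
  intro y₀ hy₀
  have := FEIT_contDiffAt hF hloc hintF hintQ hfe (m := 2)
    (by exact_mod_cast hP2) (by exact_mod_cast hQ2) hy₀
  exact_mod_cast this

lemma const_of_derivzero {f : ℝ → ℝ} (h : ∀ t ∈ Ioo (0:ℝ) 1, HasDerivAt f 0 t) :
    ∀ s ∈ Ioo (0:ℝ) 1, ∀ t ∈ Ioo (0:ℝ) 1, f s = f t := by
  have key : ∀ s t : ℝ, s ∈ Ioo (0:ℝ) 1 → t ∈ Ioo (0:ℝ) 1 → s ≤ t → f t = f s := by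
    intro s t hs ht hst
    have hsub : Icc s t ⊆ Ioo (0:ℝ) 1 := fun u hu => ⟨lt_of_lt_of_le hs.1 hu.1,
      lt_of_le_of_lt hu.2 ht.2⟩
    refine constant_of_has_deriv_right_zero (f := f) ?_ ?_ t (right_mem_Icc.2 hst)
    · exact fun u hu => ((h u (hsub hu)).continuousAt).continuousWithinAt
    · intro u hu
      exact ((h u (hsub ⟨hu.1, hu.2.le⟩)).hasDerivWithinAt)
  intro s hs t ht
  rcases le_total s t with hst | hst
  · exact (key s t hs ht hst).symm
  · exact key t s ht hs hst

lemma FEIT_star {F F₁ : ℝ → ℝ}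
    (hfe : ∀ x y : ℝ, 0 ≤ x → x < 1 → 0 ≤ y → y < 1 → x + y ≤ 1 →
      F x + (1-x) * F (y/(1-x)) = F y + (1-y) * F (x/(1-y)))
    (hd1 : ∀ t ∈ Ioo (0:ℝ) 1, HasDerivAt F (F₁ t) t)
    {x y : ℝ} (hx : 0 < x) (hy : 0 < y) (hxy : x + y < 1) :
    F₁ (y/(1-x)) = F₁ y - F (x/(1-y)) + x * F₁ (x/(1-y)) / (1-y) := by
  have hx1 : x < 1 := by linarith
  have hy1 : y < 1 := by linarith
  have h1x : (0:ℝ) < 1 - x := by linarith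
  have h1y : (0:ℝ) < 1 - y := by linarith
  have mem1 : y/(1-x) ∈ Ioo (0:ℝ) 1 := ⟨by positivity, (div_lt_one h1x).2 (by linarith)⟩
  have mem2 : x/(1-y) ∈ Ioo (0:ℝ) 1 := ⟨by positivity, (div_lt_one h1y).2 (by linarith)⟩
  have memy : y ∈ Ioo (0:ℝ) 1 := ⟨hy, hy1⟩
  have inner : HasDerivAt (fun z : ℝ => z/(1-x)) (1/(1-x)) y := by
    simpa using (hasDerivAt_id y).div_const (1-x)
  have compL : HasDerivAt (fun z => F (z/(1-x))) (F₁ (y/(1-x)) * (1/(1-x))) y := by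
    have := (hd1 _ mem1).comp y inner
    simpa [Function.comp_def] using this
  have derivL : HasDerivAt (fun z => F x + (1-x) * F (z/(1-x))) (F₁ (y/(1-x))) y := by
    have h := (compL.const_mul (1-x)).const_add (F x)
    refine h.congr_deriv ?_
    field_simp
  have hu : HasDerivAt (fun z : ℝ => 1 - z) (-1) y := by
    simpa using (hasDerivAt_id' y).const_sub (1:ℝ)
  have innerR : HasDerivAt (fun z : ℝ => x/(1-z)) (x/(1-y)^2) y := by
    have hinv : HasDerivAt (fun z : ℝ => (1-z)⁻¹) ((1-y)^2)⁻¹ y := by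
      have := (hasDerivAt_inv h1y.ne').comp y hu
      refine this.congr_deriv ?_
      field_simp
    have h2 := hinv.const_mul x
    have e : x * ((1-y)^2)⁻¹ = x/(1-y)^2 := by field_simp
    rw [← e]
    simpa [div_eq_mul_inv] using h2
  have compR : HasDerivAt (fun z => F (x/(1-z))) (F₁ (x/(1-y)) * (x/(1-y)^2)) y := by
    have := (hd1 _ mem2).comp y innerR
    simpa [Function.comp_def] using this
  have prodR : HasDerivAt (fun z => (1-z) * F (x/(1-z)))
      ((-1) * F (x/(1-y)) + (1-y) * (F₁ (x/(1-y)) * (x/(1-y)^2))) y := hu.mul compR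
  have derivR : HasDerivAt (fun z => F z + (1-z) * F (x/(1-z)))
      (F₁ y + ((-1) * F (x/(1-y)) + (1-y) * (F₁ (x/(1-y)) * (x/(1-y)^2)))) y :=
    (hd1 y memy).add prodR
  have hev : (fun z => F x + (1-x) * F (z/(1-x))) =ᶠ[nhds y]
      (fun z => F z + (1-z) * F (x/(1-z))) := by
    refine Filter.eventuallyEq_of_mem (Ioo_mem_nhds hy (by linarith : y < 1-x)) ?_
    intro z hz
    exact hfe x z hx.le hx1 (by linarith [hz.1]) (by linarith [hz.2]) (by linarith [hz.2])
  have derivL' : HasDerivAt (fun z => F x + (1-x) * F (z/(1-x)))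
      (F₁ y + ((-1) * F (x/(1-y)) + (1-y) * (F₁ (x/(1-y)) * (x/(1-y)^2)))) y :=
    derivR.congr_of_eventuallyEq hev
  have huniq := derivL.unique derivL'
  have e2 : (1-y) * (F₁ (x/(1-y)) * (x/(1-y)^2)) = x * F₁ (x/(1-y)) / (1-y) := by
    field_simp
  rw [e2] at huniq
  linarith [huniq]

lemma FEIT_starstar {F F₁ F₂ : ℝ → ℝ}
    (hfe : ∀ x y : ℝ, 0 ≤ x → x < 1 → 0 ≤ y → y < 1 → x + y ≤ 1 →
      F x + (1-x) * F (y/(1-x)) = F y + (1-y) * F (x/(1-y)))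
    (hd1 : ∀ t ∈ Ioo (0:ℝ) 1, HasDerivAt F (F₁ t) t)
    (hd2 : ∀ t ∈ Ioo (0:ℝ) 1, HasDerivAt F₁ (F₂ t) t)
    {x y : ℝ} (hx : 0 < x) (hy : 0 < y) (hxy : x + y < 1) :
    F₂ (y/(1-x)) * (y/(1-x)^2) = x * F₂ (x/(1-y)) / (1-y)^2 := by
  have hx1 : x < 1 := by linarith
  have hy1 : y < 1 := by linarith
  have h1x : (0:ℝ) < 1 - x := by linarith
  have h1y : (0:ℝ) < 1 - y := by linarith
  have mem1 : y/(1-x) ∈ Ioo (0:ℝ) 1 := ⟨by positivity, (div_lt_one h1x).2 (by linarith)⟩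
  have mem2 : x/(1-y) ∈ Ioo (0:ℝ) 1 := ⟨by positivity, (div_lt_one h1y).2 (by linarith)⟩
  have hu : HasDerivAt (fun z : ℝ => 1 - z) (-1) x := by
    simpa using (hasDerivAt_id' x).const_sub (1:ℝ)
  have innerx : HasDerivAt (fun x' : ℝ => y/(1-x')) (y/(1-x)^2) x := by
    have hinv : HasDerivAt (fun z : ℝ => (1-z)⁻¹) ((1-x)^2)⁻¹ x := by
      have := (hasDerivAt_inv h1x.ne').comp x hu
      refine this.congr_deriv ?_
      field_simp
    have h2 := hinv.const_mul y
    have e : y * ((1-x)^2)⁻¹ = y/(1-x)^2 := by field_simp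
    rw [← e]
    simpa [div_eq_mul_inv] using h2
  have derivL : HasDerivAt (fun x' => F₁ (y/(1-x'))) (F₂ (y/(1-x)) * (y/(1-x)^2)) x := by
    have := (hd2 _ mem1).comp x innerx
    simpa [Function.comp_def] using this
  have hdiv : HasDerivAt (fun x' : ℝ => x'/(1-y)) (1/(1-y)) x := by
    simpa using (hasDerivAt_id x).div_const (1-y)
  have c2 : HasDerivAt (fun x' => F (x'/(1-y))) (F₁ (x/(1-y)) * (1/(1-y))) x := by
    have := (hd1 _ mem2).comp x hdiv
    simpa [Function.comp_def] using this
  have c2' : HasDerivAt (fun x' => F₁ (x'/(1-y))) (F₂ (x/(1-y)) * (1/(1-y))) x := by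
    have := (hd2 _ mem2).comp x hdiv
    simpa [Function.comp_def] using this
  have c3 : HasDerivAt (fun x' => x' * F₁ (x'/(1-y)))
      (1 * F₁ (x/(1-y)) + x * (F₂ (x/(1-y)) * (1/(1-y)))) x :=
    (hasDerivAt_id x).mul c2'
  have c4 := c3.div_const (1-y)
  have derivR : HasDerivAt (fun x' => F₁ y - F (x'/(1-y)) + x' * F₁ (x'/(1-y)) / (1-y))
      (0 - F₁ (x/(1-y)) * (1/(1-y)) + (1 * F₁ (x/(1-y)) + x * (F₂ (x/(1-y)) * (1/(1-y)))) / (1-y))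
      x := ((hasDerivAt_const x (F₁ y)).sub c2).add c4
  have hev : (fun x' => F₁ (y/(1-x'))) =ᶠ[nhds x]
      (fun x' => F₁ y - F (x'/(1-y)) + x' * F₁ (x'/(1-y)) / (1-y)) := by
    refine Filter.eventuallyEq_of_mem (Ioo_mem_nhds hx (by linarith : x < 1-y)) ?_
    intro x' hx'
    exact FEIT_star hfe hd1 hx'.1 hy (by linarith [hx'.2])
  have derivL' : HasDerivAt (fun x' => F₁ (y/(1-x')))
      (0 - F₁ (x/(1-y)) * (1/(1-y)) + (1 * F₁ (x/(1-y)) + x * (F₂ (x/(1-y)) * (1/(1-y)))) / (1-y))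
      x := derivR.congr_of_eventuallyEq hev
  have huniq := derivL.unique derivL'
  have e : 0 - F₁ (x/(1-y)) * (1/(1-y)) + (1 * F₁ (x/(1-y)) + x * (F₂ (x/(1-y)) * (1/(1-y)))) / (1-y)
      = x * F₂ (x/(1-y)) / (1-y)^2 := by
    field_simp
    ring
  rw [e] at huniq
  exact huniq

lemma FEIT_const {F F₁ F₂ : ℝ → ℝ}
    (hfe : ∀ x y : ℝ, 0 ≤ x → x < 1 → 0 ≤ y → y < 1 → x + y ≤ 1 →
      F x + (1-x) * F (y/(1-x)) = F y + (1-y) * F (x/(1-y)))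
    (hd1 : ∀ t ∈ Ioo (0:ℝ) 1, HasDerivAt F (F₁ t) t)
    (hd2 : ∀ t ∈ Ioo (0:ℝ) 1, HasDerivAt F₁ (F₂ t) t)
    {u v : ℝ} (hu : u ∈ Ioo (0:ℝ) 1) (hv : v ∈ Ioo (0:ℝ) 1) :
    u * (1-u) * F₂ u = v * (1-v) * F₂ v := by
  obtain ⟨hu0, hu1⟩ := hu
  obtain ⟨hv0, hv1⟩ := hv
  have huv : (0:ℝ) < 1 - u*v := by nlinarith
  set x := v*(1-u)/(1-u*v) with hxdef
  set y := u*(1-v)/(1-u*v) with hydef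
  have hx0 : 0 < x := div_pos (mul_pos hv0 (by linarith)) huv
  have hy0 : 0 < y := div_pos (mul_pos hu0 (by linarith)) huv
  have hxy : x + y < 1 := by
    rw [hxdef, hydef, ← add_div, div_lt_one huv]
    nlinarith
  have h1y : (0:ℝ) < 1 - y := by linarith
  have h1x : (0:ℝ) < 1 - x := by linarith
  have h1u : (0:ℝ) < 1 - u := by linarith
  have h1v : (0:ℝ) < 1 - v := by linarith
  have huv2 : 1 - v*u ≠ 0 := by nlinarith
  have h1xeq : 1 - x = (1-v)/(1-u*v) := by
    rw [hxdef]; field_simp; ring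
  have h1yeq : 1 - y = (1-u)/(1-u*v) := by
    rw [hydef]; field_simp; ring
  have harg1 : y/(1-x) = u := by
    rw [h1xeq, hydef]
    field_simp
  have harg2 : x/(1-y) = v := by
    rw [h1yeq, hxdef]
    field_simp
  have key := FEIT_starstar hfe hd1 hd2 hx0 hy0 hxy
  rw [harg1, harg2] at key
  have e1 : y/(1-x)^2 = u*(1-u*v)/(1-v) := by
    rw [hydef, h1xeq, div_pow]
    rw [div_div_div_eq]
    field_simp
  have e2 : x * F₂ v / (1-y)^2 = F₂ v * (v*(1-u*v)/(1-u)) := by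
    have e2' : x/(1-y)^2 = v*(1-u*v)/(1-u) := by
      rw [hxdef, h1yeq, div_pow]
      rw [div_div_div_eq]
      field_simp
    calc x * F₂ v / (1-y)^2 = F₂ v * (x/(1-y)^2) := by ring
    _ = F₂ v * (v*(1-u*v)/(1-u)) := by rw [e2']
  rw [e1, e2] at key
  -- key : F₂ u * (u*(1-u*v)/(1-v)) = F₂ v * (v*(1-u*v)/(1-u))
  have key2 : F₂ u * (u*(1-u*v)) * (1-u) = F₂ v * (v*(1-u*v)) * (1-v) := by
    field_simp at key
    linear_combination (1-u*v) * key
  have key3 : (1-u*v) * (u * (1-u) * F₂ u) = (1-u*v) * (v * (1-v) * F₂ v) := by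
    linear_combination key2
  exact mul_left_cancel₀ huv.ne' key3

theorem FEIT_core {F : ℝ → ℝ} (hF : Measurable F)
    (h0 : F 0 = 0) (h1 : F 1 = 0)
    (hfe : ∀ x y : ℝ, 0 ≤ x → x < 1 → 0 ≤ y → y < 1 → x + y ≤ 1 →
      F x + (1-x) * F (y/(1-x)) = F y + (1-y) * F (x/(1-y))) :
    ∃ a : ℝ, ∀ y : ℝ, 0 ≤ y → y ≤ 1 → F y = a * H2 y := by
  have hsmooth := FEIT_smooth hF hfe
  set F₁ := deriv F with hF₁def
  set F₂ := deriv F₁ with hF₂def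
  have hopen : ∀ t ∈ Ioo (0:ℝ) 1, Ioo (0:ℝ) 1 ∈ nhds t :=
    fun t ht => Ioo_mem_nhds ht.1 ht.2
  have hd1 : ∀ t ∈ Ioo (0:ℝ) 1, HasDerivAt F (F₁ t) t := by
    intro t ht
    exact ((hsmooth t ht).differentiableAt (by norm_num)).hasDerivAt
  have hc2 : ContDiffOn ℝ 2 F (Ioo 0 1) :=
    fun t ht => (hsmooth t ht).contDiffWithinAt
  have hF₁c : ContDiffOn ℝ 1 F₁ (Ioo 0 1) := by
    have h := (contDiffOn_succ_iff_deriv_of_isOpen (n := 1) isOpen_Ioo).1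
      (by exact_mod_cast hc2)
    exact h.2.2
  have hd2 : ∀ t ∈ Ioo (0:ℝ) 1, HasDerivAt F₁ (F₂ t) t := by
    intro t ht
    exact (((hF₁c t ht).contDiffAt (hopen t ht)).differentiableAt one_ne_zero).hasDerivAt
  -- second derivative is -a/(t(1-t))
  set a : ℝ := -(F₂ (1/2) / 4) with hadef
  have hF₂eq : ∀ t ∈ Ioo (0:ℝ) 1, F₂ t = -a / (t * (1-t)) := by
    intro t ht
    have hkey := FEIT_const hfe hd1 hd2 ht (by norm_num : (1/2:ℝ) ∈ Ioo (0:ℝ) 1)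
    have ht0 : 0 < t := ht.1
    have ht1 : t < 1 := ht.2
    have h1t : (0:ℝ) < 1 - t := by linarith
    rw [hadef]
    rw [eq_div_iff (by positivity : t * (1-t) ≠ 0)]
    norm_num at hkey ⊢
    linarith [hkey]
  -- first antiderivative: F₁ t - a * (log(1-t) - log t) is constant
  set G1 : ℝ → ℝ := fun t => F₁ t - a * (Real.log (1-t) - Real.log t) with hG1def
  have hG1' : ∀ t ∈ Ioo (0:ℝ) 1, HasDerivAt G1 0 t := by
    intro t ht
    have h := (hd2 t ht).sub ((hasDerivAt_H2' ht.1 ht.2).const_mul a)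
    have e : F₂ t - a * (-(1 / (t * (1-t)))) = 0 := by
      rw [hF₂eq t ht]
      have ht0 : (0:ℝ) < t := ht.1
      have h1t : (0:ℝ) < 1 - t := by linarith [ht.2]
      field_simp
      ring
    rw [← e]
    exact h
  have hG1const := const_of_derivzero hG1'
  set b : ℝ := G1 (1/2) with hbdef
  set G2 : ℝ → ℝ := fun t => F t - a * H2 t - b * t with hG2def
  have hG2' : ∀ t ∈ Ioo (0:ℝ) 1, HasDerivAt G2 0 t := by
    intro t ht
    have h := ((hd1 t ht).sub ((hasDerivAt_H2 ht.1 ht.2).const_mul a)).sub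
      ((hasDerivAt_id t).const_mul b)
    have e : F₁ t - a * (Real.log (1-t) - Real.log t) - b * 1 = 0 := by
      have := hG1const t ht (1/2) (by norm_num)
      rw [← hbdef, hG1def] at this
      simp only at this
      linarith [this]
    rw [← e]
    exact h
  have hG2const := const_of_derivzero hG2'
  set c : ℝ := G2 (1/2) with hcdef
  have hform : ∀ t ∈ Ioo (0:ℝ) 1, F t = a * H2 t + b * t + c := by
    intro t ht
    have := hG2const t ht (1/2) (by norm_num)
    rw [← hcdef, hG2def] at this
    simp only at this
    linarith [this]
  -- symmetry gives b = 0
  have hsym : F (1/4 : ℝ) = F (3/4 : ℝ) := by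
    have h := hfe (1/4) (3/4) (by norm_num) (by norm_num) (by norm_num) (by norm_num)
      (by norm_num)
    norm_num at h
    linarith [h, h1]
  have hb0 : b = 0 := by
    have h14 := hform (1/4) (by norm_num)
    have h34 := hform (3/4) (by norm_num)
    have hH : H2 (3/4 : ℝ) = H2 (1/4 : ℝ) := by
      have := H2_symm (1/4 : ℝ)
      norm_num at this
      exact this
    rw [h14, h34, hH] at hsym
    linear_combination (-2 : ℝ) * hsym
  -- the specific instance gives c = 0
  have hc0 : c = 0 := by
    have h := hfe (1/2) (1/4) (by norm_num) (by norm_num) (by norm_num) (by norm_num)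
      (by norm_num)
    norm_num at h
    have hH := H2_fe (x := 1/2) (y := 1/4) (by norm_num) (by norm_num) (by norm_num)
    norm_num at hH
    have e1 := hform (1/2) (by norm_num)
    have e2 := hform (1/4) (by norm_num)
    have e3 := hform (2/3) (by norm_num)
    rw [hb0] at e1 e2 e3
    rw [e1, e2, e3] at h
    linear_combination (-4 : ℝ) * h + (4*a) * hH
  refine ⟨a, fun y hy0 hy1 => ?_⟩
  rcases eq_or_lt_of_le hy0 with h | h
  · rw [← h, h0, H2_zero]; ring
  rcases eq_or_lt_of_le hy1 with h' | h'
  · rw [h', h1, H2_one]; ring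
  have := hform y ⟨h, h'⟩
  rw [hb0, hc0] at this
  rw [this]
  ring


/-- Symmetric special case of the generalized fundamental equation of
information theory: measurable `U, E` satisfying
`(1-q₃)U(q₁/(1-q₃)) + E(q₃) = (1-q₁)U(q₃/(1-q₁)) + E(q₁)` must be of entropy-plus-affine
form. -/
theorem fundamental_equation_symmetric_solution (U E : ℝ → ℝ)
    (hU : Measurable ((Set.Icc (0:ℝ) 1).restrict U))
    (hE : Measurable ((Set.Ico (0:ℝ) 1).restrict E))
    (heq : ∀ q₁ q₃ : ℝ, 0 ≤ q₁ → q₁ < 1 → 0 ≤ q₃ → q₃ < 1 → q₁ + q₃ ≤ 1 →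
      (1 - q₃) * U (q₁ / (1 - q₃)) + E q₃ = (1 - q₁) * U (q₃ / (1 - q₁)) + E q₁) :
    ∃ a b₁ b₂ d : ℝ,
      (∀ y : ℝ, 0 ≤ y → y ≤ 1 → U y = a * H2 y + b₂ * y + (b₁ - b₂)) ∧
      (∀ x : ℝ, 0 ≤ x → x < 1 → E x = a * H2 x + b₁ * x + d) := by
  classical
  set V : ℝ → ℝ := fun t => if h : t ∈ Set.Icc (0:ℝ) 1 then U t else (0:ℝ) with hVdef
  have hV : Measurable V := by
    exact Measurable.dite (f := (Set.Icc (0:ℝ) 1).restrict U)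
      (g := fun _ => (0:ℝ)) hU measurable_const measurableSet_Icc
  have hVeq : ∀ t, 0 ≤ t → t ≤ 1 → V t = U t := fun t h1 h2 => dif_pos ⟨h1, h2⟩
  set F : ℝ → ℝ := (Set.Icc (0:ℝ) 1).indicator
    (fun t => V t - (1-t) * V 0 - t * V 1) with hFdef
  have hFmeas : Measurable F := by
    refine Measurable.indicator ?_ measurableSet_Icc
    exact (hV.sub ((measurable_const.sub measurable_id).mul measurable_const)).sub
      (measurable_id.mul measurable_const)
  have hFeq : ∀ t, 0 ≤ t → t ≤ 1 → F t = U t - (1-t) * U 0 - t * U 1 := by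
    intro t h1 h2
    have hmem : t ∈ Set.Icc (0:ℝ) 1 := ⟨h1, h2⟩
    have hh := Set.indicator_of_mem hmem (fun t => V t - (1-t) * V 0 - t * V 1)
    rw [hFdef, hh, hVeq t h1 h2, hVeq 0 le_rfl zero_le_one, hVeq 1 zero_le_one le_rfl]
  have hF0 : F 0 = 0 := by rw [hFeq 0 le_rfl zero_le_one]; ring
  have hF1 : F 1 = 0 := by rw [hFeq 1 zero_le_one le_rfl]; ring
  have hEel : ∀ q : ℝ, 0 ≤ q → q < 1 → E q = U q + E 0 - (1-q) * U 0 := by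
    intro q h1 h2
    have h := heq q 0 h1 h2 (by norm_num) (by norm_num) (by linarith)
    norm_num at h
    linarith [h]
  have hUfe : ∀ x y : ℝ, 0 ≤ x → x < 1 → 0 ≤ y → y < 1 → x + y ≤ 1 →
      (1-x) * U (y/(1-x)) + U x - (1-x) * U 0
        = (1-y) * U (x/(1-y)) + U y - (1-y) * U 0 := by
    intro x y hx hx1 hy hy1 hxy
    have h := heq y x hy hy1 hx hx1 (by linarith)
    rw [hEel x hx hx1, hEel y hy hy1] at h
    linarith [h]
  have hfe : ∀ x y : ℝ, 0 ≤ x → x < 1 → 0 ≤ y → y < 1 → x + y ≤ 1 →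
      F x + (1-x) * F (y/(1-x)) = F y + (1-y) * F (x/(1-y)) := by
    intro x y hx hx1 hy hy1 hxy
    have h1x : (0:ℝ) < 1-x := by linarith
    have h1y : (0:ℝ) < 1-y := by linarith
    have m1 : 0 ≤ y/(1-x) := by positivity
    have m2 : y/(1-x) ≤ 1 := by rw [div_le_one h1x]; linarith
    have m3 : 0 ≤ x/(1-y) := by positivity
    have m4 : x/(1-y) ≤ 1 := by rw [div_le_one h1y]; linarith
    rw [hFeq x hx hx1.le, hFeq y hy hy1.le, hFeq _ m1 m2, hFeq _ m3 m4]
    have hU' := hUfe x y hx hx1 hy hy1 hxy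
    have ex : (1-x) * (1 - y/(1-x)) = 1 - x - y := by field_simp
    have ey : (1-y) * (1 - x/(1-y)) = 1 - x - y := by field_simp; ring
    have ex2 : (1-x) * (y/(1-x)) = y := by field_simp
    have ey2 : (1-y) * (x/(1-y)) = x := by field_simp
    linear_combination hU' - (U 0) * ex - (U 1) * ex2 + (U 0) * ey + (U 1) * ey2
  obtain ⟨a, ha⟩ := FEIT_core hFmeas hF0 hF1 hfe
  refine ⟨a, U 1, U 1 - U 0, E 0, ?_, ?_⟩
  · intro y h1 h2
    have h := ha y h1 h2
    rw [hFeq y h1 h2] at h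
    linarith [h]
  · intro x h1 h2
    rw [hEel x h1 h2]
    have h := ha x h1 h2.le
    rw [hFeq x h1 h2.le] at h
    linarith [h]
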